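/- Let p > q ≥ 1 be coprime integers, let q' be the unique integer with 1 ≤ q' ≤ p/2 and q·q' ≡ ±1 (mod p), and let w_0, …, w_p be the (p,q)-sequence of words in the free group F = ⟨z,y⟩. Then w_{q'} is a primitive element of F. More precisely, if qq' ≡ 1 (mod p) then w_{q'} equals the Osborne–Zieschang word w(q', p−q'), and if qq' ≡ −1 (mod p) then w_{q'} is a cyclic permutation of w(q', p−q'). -/

import Mathlib

/-- An element of the free group `F = ⟨z, y⟩` (generator `true` = `z`,
`false` = `y`) is *primitive* if it belongs to some generating pair of `F`. -/
def IsPrimitive (w : FreeGroup Bool) : Prop :=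
  ∃ w' : FreeGroup Bool, Subgroup.closure {w, w'} = ⊤

/-- The word in `F = ⟨z, y⟩` spelled by a list of letters (`true` ↦ `z`, `false` ↦ `y`). -/
def wordOf (L : List Bool) : FreeGroup Bool :=
  (L.map fun b => FreeGroup.of b).prod

/-- Letters of the word `w_j` of the `(p,q)`-sequence. -/
def pqLetters (p q j : ℕ) : List Bool :=
  (List.range p).map fun i =>
    decide (∃ n ∈ Finset.range j, (i + 1) % p = (1 + n * q) % p)

/-- Letters of the Osborne–Zieschang word `w(m, n)`. -/
def ozLetters (m n : ℕ) : List Bool :=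
  (List.range (m + n)).map fun k => decide ((1 + k * m) % (m + n) ∈ Finset.Icc 1 m)

/-! ### Auxiliary lemmas -/

lemma wordOf_append (L₁ L₂ : List Bool) : wordOf (L₁ ++ L₂) = wordOf L₁ * wordOf L₂ := by
  simp [wordOf]

lemma wordOf_cons (b : Bool) (L : List Bool) : wordOf (b :: L) = FreeGroup.of b * wordOf L := by
  simp [wordOf]

/-- The endomorphism of the free group induced by a substitution on letters. -/
def substHom (f : Bool → List Bool) : FreeGroup Bool →* FreeGroup Bool :=
  FreeGroup.lift fun b => wordOf (f b)

lemma substHom_of (f : Bool → List Bool) (b : Bool) :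
    substHom f (FreeGroup.of b) = wordOf (f b) :=
  FreeGroup.lift_apply_of

lemma substHom_wordOf (f : Bool → List Bool) (L : List Bool) :
    substHom f (wordOf L) = wordOf (L.flatMap f) := by
  induction L with
  | nil => simp [wordOf]
  | cons b L ih =>
      rw [wordOf_cons, map_mul, substHom_of, ih, List.flatMap_cons, wordOf_append]

def sigma1 : Bool → List Bool := fun b => if b then [true, false] else [false]
def sigma2 : Bool → List Bool := fun b => if b then [true] else [false, true]

/-- `z ↦ z y`, `y ↦ y` as an automorphism of the free group. -/
def eqv1 : FreeGroup Bool ≃* FreeGroup Bool :=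
  MonoidHom.toMulEquiv (substHom sigma1)
    (FreeGroup.lift fun b => if b then FreeGroup.of true * (FreeGroup.of false)⁻¹
      else FreeGroup.of false)
    (FreeGroup.ext_hom _ _ (by
      rintro (_ | _) <;>
        simp [substHom, sigma1, wordOf, mul_assoc]))
    (FreeGroup.ext_hom _ _ (by
      rintro (_ | _) <;>
        simp [substHom, sigma1, wordOf, mul_assoc]))

/-- `z ↦ z`, `y ↦ y z` as an automorphism of the free group. -/
def eqv2 : FreeGroup Bool ≃* FreeGroup Bool :=
  MonoidHom.toMulEquiv (substHom sigma2)
    (FreeGroup.lift fun b => if b then FreeGroup.of true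
      else FreeGroup.of false * (FreeGroup.of true)⁻¹)
    (FreeGroup.ext_hom _ _ (by
      rintro (_ | _) <;>
        simp [substHom, sigma2, wordOf, mul_assoc]))
    (FreeGroup.ext_hom _ _ (by
      rintro (_ | _) <;>
        simp [substHom, sigma2, wordOf, mul_assoc]))

lemma eqv1_apply (x : FreeGroup Bool) : eqv1 x = substHom sigma1 x := rfl
lemma eqv2_apply (x : FreeGroup Bool) : eqv2 x = substHom sigma2 x := rfl

lemma IsPrimitive.map (e : FreeGroup Bool ≃* FreeGroup Bool) {w : FreeGroup Bool}
    (h : IsPrimitive w) : IsPrimitive (e w) := by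
  obtain ⟨w', hw⟩ := h
  refine ⟨e w', ?_⟩
  have h2 := congrArg (Subgroup.map e.toMonoidHom) hw
  rwa [MonoidHom.map_closure, Set.image_pair,
    Subgroup.map_top_of_surjective _ e.surjective] at h2

lemma isPrimitive_of_true : IsPrimitive (FreeGroup.of true) := by
  refine ⟨FreeGroup.of false, ?_⟩
  have h : ({FreeGroup.of true, FreeGroup.of false} : Set (FreeGroup Bool)) =
      Set.range FreeGroup.of := by
    ext x
    constructor
    · rintro (rfl | rfl)
      · exact ⟨true, rfl⟩
      · exact ⟨false, rfl⟩
    · rintro ⟨(_ | _), rfl⟩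
      · exact Or.inr rfl
      · exact Or.inl rfl
  rw [h, FreeGroup.closure_range_of]

lemma isPrimitive_conj (u : FreeGroup Bool) {w : FreeGroup Bool} (h : IsPrimitive w) :
    IsPrimitive (u * w * u⁻¹) := by
  simpa using h.map (MulAut.conj u)

lemma isPrimitive_wordOf_rotate (l : List Bool) (k : ℕ) (h : IsPrimitive (wordOf l)) :
    IsPrimitive (wordOf (l.rotate k)) := by
  rcases eq_or_ne l [] with rfl | hl
  · simpa using h
  · have hlen : 0 < l.length := List.length_pos_iff.mpr hl
    rw [← List.rotate_mod]
    have hk : k % l.length ≤ l.length := le_of_lt (Nat.mod_lt _ hlen)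
    rw [List.rotate_eq_drop_append_take hk]
    set t := wordOf (l.take (k % l.length)) with ht
    have hsplit : wordOf l = t * wordOf (l.drop (k % l.length)) := by
      rw [ht, ← wordOf_append, List.take_append_drop]
    have hrw : wordOf (l.drop (k % l.length) ++ l.take (k % l.length)) =
        t⁻¹ * wordOf l * t := by
      rw [wordOf_append, hsplit, ← ht]; group
    rw [hrw]
    simpa using isPrimitive_conj t⁻¹ h

/-! ### The basic list of letters -/

/-- The list of letters `k ↦ (k·m mod p < m)`, `k < p`. -/
def tList (m p : ℕ) : List Bool := (List.range p).map fun k => decide (k * m % p < m)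

lemma mod_once {a x : ℕ} (h1 : x ≤ a) (h2 : a < 2 * x) : a % x = a - x := by
  rw [Nat.mod_eq_sub_mod h1, Nat.mod_eq_of_lt (by omega)]

lemma ozLetters_eq_tList (m n : ℕ) (hm : 1 ≤ m) (hn : 1 ≤ n) :
    ozLetters m n = tList m (m + n) := by
  unfold ozLetters tList
  apply List.map_congr_left
  intro k hk
  rw [List.mem_range] at hk
  have hp : 0 < m + n := by omega
  have hrlt : k * m % (m + n) < m + n := Nat.mod_lt _ hp
  have h1 : (1 + k * m) % (m + n) = (1 + k * m % (m + n)) % (m + n) := by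
    rw [Nat.add_mod 1 (k * m) (m + n), Nat.mod_add_mod]
  rw [decide_eq_decide, h1]
  set r := k * m % (m + n) with hr
  by_cases hc : r < m
  · rw [Nat.mod_eq_of_lt (show 1 + r < m + n by omega)]
    simp only [Finset.mem_Icc]
    omega
  · rcases eq_or_lt_of_le (show 1 + r ≤ m + n by omega) with he | hlt
    · rw [he, Nat.mod_self]
      simp only [Finset.mem_Icc]
      omega
    · rw [Nat.mod_eq_of_lt hlt]
      simp only [Finset.mem_Icc]
      omega

/-- Generic lemma: a flatMap over `range n` whose blocks spell consecutive
segments of `g` is a `map` over a single range. -/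
lemma flatMap_range_eq (σf : ℕ → List Bool) (g : ℕ → Bool) (s : ℕ → ℕ)
    (h0 : s 0 = 0) (hs : ∀ k, s (k + 1) = s k + (σf k).length) :
    ∀ n, (∀ k, k < n → σf k = (List.range' (s k) (σf k).length).map g) →
      (List.range n).flatMap σf = (List.range (s n)).map g := by
  intro n
  induction n with
  | zero => intro _; simp [h0]
  | succ n ih =>
      intro hblock
      rw [List.range_succ, List.flatMap_append, ih (fun k hk => hblock k (by omega))]
      have hsing : List.flatMap σf [n] = σf n := by simp
      rw [hsing, hs n]
      have hr : List.range (s n + (σf n).length) =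
          List.range (s n) ++ List.range' (s n) ((σf n).length) := by
        rw [List.range_eq_range', List.range_eq_range']
        have h := List.range'_append (s := 0) (m := s n) (n := (σf n).length) (step := 1)
        simp only [one_mul, zero_add] at h
        rw [← h]
      rw [hr, List.map_append]
      conv_lhs => rw [hblock n (by omega)]

/-! ### The two substitution steps -/

lemma tList_step1 (m n : ℕ) (hm : 1 ≤ m) (hmn : m ≤ n) (hcop : Nat.Coprime m (m + n)) :
    tList m (m + n) = (tList m n).flatMap sigma1 := by
  have hn : 0 < n := by omega
  set p := m + n with hp
  have hp0 : 0 < p := by omega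
  set f : ℕ → Bool := fun k => decide (k * m % n < m) with hf
  set σf : ℕ → List Bool := fun k => sigma1 (f k) with hσ
  set g : ℕ → Bool := fun j => decide (j * m % p < m) with hg
  set s : ℕ → ℕ := fun k => ((List.range k).map fun j => (σf j).length).sum with hsdef
  have h0 : s 0 = 0 := by simp [hsdef]
  have hs : ∀ k, s (k + 1) = s k + (σf k).length := by
    intro k; simp [hsdef, List.range_succ]
  have hσk : ∀ k, σf k = if k * m % n < m then [true, false] else [false] := by
    intro k
    by_cases hc : k * m % n < m <;> simp [hσ, hf, sigma1, hc]
  have hlenσ : ∀ k, (σf k).length = if k * m % n < m then 2 else 1 := by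
    intro k; rw [hσk k]; by_cases hc : k * m % n < m <;> simp [hc]
  have inv : ∀ k, s k * m % p = if k * m % n < m then k * m % n else k * m % n + m := by
    intro k
    induction k with
    | zero =>
        rw [h0]
        simp only [Nat.zero_mul, Nat.zero_mod]
        rw [if_pos (by omega)]
    | succ k ih =>
        have hr : k * m % n < n := Nat.mod_lt _ hn
        set r := k * m % n with hrdef
        have hmod : (k + 1) * m % n = (r + m) % n := by
          rw [add_one_mul]
          conv_rhs => rw [Nat.add_mod r m n, hrdef, Nat.mod_mod_of_dvd _ dvd_rfl]
          rw [Nat.add_mod (k * m) m n]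
        have hstep : s (k + 1) * m % p = (s k * m % p + (σf k).length * m) % p := by
          rw [hs k, add_mul, ← Nat.mod_add_mod]
        rw [hstep, ih, hmod, hlenσ k]
        by_cases hc : r < m
        · rw [if_pos hc, if_pos hc]
          by_cases h2 : r + m < n
          · rw [Nat.mod_eq_of_lt h2, if_neg (by omega)]
            have hval : (r + 2 * m) % p = r + 2 * m := Nat.mod_eq_of_lt (by omega)
            omega
          · have e1 : (r + m) % n = r + m - n := mod_once (by omega) (by omega)
            rw [e1, if_pos (by omega)]
            have hval : (r + 2 * m) % p = r + 2 * m - p := mod_once (by omega) (by omega)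
            omega
        · rw [if_neg hc, if_neg hc]
          by_cases h2 : r + m < n
          · rw [Nat.mod_eq_of_lt h2, if_neg (by omega)]
            have hval : (r + m + 1 * m) % p = r + m + 1 * m := Nat.mod_eq_of_lt (by omega)
            omega
          · have e1 : (r + m) % n = r + m - n := mod_once (by omega) (by omega)
            rw [e1, if_pos (by omega)]
            have hval : (r + m + 1 * m) % p = r + m + 1 * m - p := mod_once (by omega) (by omega)
            omega
  have hblock : ∀ k, k < n → σf k = (List.range' (s k) ((σf k).length)).map g := by
    intro k _
    have hinv := inv k
    set r := k * m % n with hrdef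
    have hr : r < n := Nat.mod_lt _ hn
    by_cases hc : r < m
    · rw [hσk k, if_pos hc]
      have hg1 : g (s k) = true := by
        simp only [hg, decide_eq_true_eq]
        rw [hinv, if_pos hc]; exact hc
      have hg2 : g (s k + 1) = false := by
        simp only [hg, decide_eq_false_iff_not, not_lt]
        have : (s k + 1) * m % p = (s k * m % p + m) % p := by
          rw [add_one_mul, ← Nat.mod_add_mod]
        rw [this, hinv, if_pos hc, Nat.mod_eq_of_lt (by omega)]
        omega
      simp [List.range', hg1, hg2]
    · rw [hσk k, if_neg hc]
      have hg1 : g (s k) = false := by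
        simp only [hg, decide_eq_false_iff_not, not_lt]
        rw [hinv, if_neg hc]
        omega
      simp [List.range', hg1]
  have hmain := flatMap_range_eq σf g s h0 hs n hblock
  have hbounds : ∀ k, k ≤ s k ∧ s k ≤ 2 * k := by
    intro k
    induction k with
    | zero => omega
    | succ k ih =>
        have := hlenσ k
        rw [hs k]
        by_cases hc : k * m % n < m <;> simp [hc] at this <;> omega
  have hsn : s n = p := by
    have h1 : s n * m % p = 0 := by
      have := inv n
      rw [Nat.mul_mod_right] at this
      rw [this, if_pos (by omega)]
    have hdvd : p ∣ s n * m := Nat.dvd_of_mod_eq_zero h1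
    have hdvd2 : p ∣ s n := (Nat.Coprime.dvd_of_dvd_mul_right (hcop.symm) hdvd)
    obtain ⟨c, hc⟩ := hdvd2
    have hb := hbounds n
    have hc1 : c = 1 := by
      rcases Nat.lt_or_ge c 2 with h | h
      · interval_cases c <;> omega
      · have : p * 2 ≤ p * c := Nat.mul_le_mul_left p h
        omega
    rw [hc1, mul_one] at hc
    exact hc
  rw [hsn] at hmain
  have hrhs : (tList m n).flatMap sigma1 = (List.range n).flatMap σf := by
    unfold tList
    rw [List.flatMap_map]
  rw [hrhs, hmain]
  rfl

lemma tList_step2 (m p : ℕ) (hmp : m < p) (h2m : p < 2 * m) (hcop : Nat.Coprime m p) :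
    tList m p = (tList (2 * m - p) m).flatMap sigma2 := by
  set a := 2 * m - p with ha
  have ha1 : 1 ≤ a := by omega
  have hm0 : 0 < m := by omega
  have hp0 : 0 < p := by omega
  set f : ℕ → Bool := fun k => decide (k * a % m < a) with hf
  set σf : ℕ → List Bool := fun k => sigma2 (f k) with hσ
  set g : ℕ → Bool := fun j => decide (j * m % p < m) with hg
  set s : ℕ → ℕ := fun k => ((List.range k).map fun j => (σf j).length).sum with hsdef
  have h0 : s 0 = 0 := by simp [hsdef]
  have hs : ∀ k, s (k + 1) = s k + (σf k).length := by
    intro k; simp [hsdef, List.range_succ]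
  have hσk : ∀ k, σf k = if k * a % m < a then [true] else [false, true] := by
    intro k
    by_cases hc : k * a % m < a <;> simp [hσ, hf, sigma2, hc]
  have hlenσ : ∀ k, (σf k).length = if k * a % m < a then 1 else 2 := by
    intro k; rw [hσk k]; by_cases hc : k * a % m < a <;> simp [hc]
  have inv : ∀ k, s k * m % p = if k * a % m < a then k * a % m else k * a % m + (p - m) := by
    intro k
    induction k with
    | zero =>
        rw [h0]
        simp only [Nat.zero_mul, Nat.zero_mod]
        rw [if_pos (by omega)]
    | succ k ih =>
        have hr : k * a % m < m := Nat.mod_lt _ hm0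
        set r := k * a % m with hrdef
        have hmod : (k + 1) * a % m = (r + a) % m := by
          rw [add_one_mul]
          conv_rhs => rw [Nat.add_mod r a m, hrdef, Nat.mod_mod_of_dvd _ dvd_rfl]
          rw [Nat.add_mod (k * a) a m]
        have hstep : s (k + 1) * m % p = (s k * m % p + (σf k).length * m) % p := by
          rw [hs k, add_mul, ← Nat.mod_add_mod]
        rw [hstep, ih, hmod, hlenσ k]
        by_cases hc : r < a
        · rw [if_pos hc, if_pos hc]
          by_cases h2 : r + a < m
          · rw [Nat.mod_eq_of_lt h2, if_neg (by omega)]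
            have hval : (r + 1 * m) % p = r + 1 * m := Nat.mod_eq_of_lt (by omega)
            omega
          · have e1 : (r + a) % m = r + a - m := mod_once (by omega) (by omega)
            rw [e1, if_pos (by omega)]
            have hval : (r + 1 * m) % p = r + 1 * m - p := mod_once (by omega) (by omega)
            omega
        · rw [if_neg hc, if_neg hc]
          by_cases h2 : r + a < m
          · rw [Nat.mod_eq_of_lt h2, if_neg (by omega)]
            have hval : (r + (p - m) + 2 * m) % p = r + (p - m) + 2 * m - p :=
              mod_once (by omega) (by omega)
            omega
          · have e1 : (r + a) % m = r + a - m := mod_once (by omega) (by omega)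
            rw [e1, if_pos (by omega)]
            have hval : (r + (p - m) + 2 * m) % p = (r + (p - m) + 2 * m - p) % p := by
              rw [Nat.mod_eq_sub_mod (by omega)]
            have hval2 : (r + (p - m) + 2 * m - p) % p = r + (p - m) + 2 * m - p - p :=
              mod_once (by omega) (by omega)
            omega
  have hblock : ∀ k, k < m → σf k = (List.range' (s k) ((σf k).length)).map g := by
    intro k _
    have hinv := inv k
    set r := k * a % m with hrdef
    have hr : r < m := Nat.mod_lt _ hm0
    by_cases hc : r < a
    · rw [hσk k, if_pos hc]
      have hg1 : g (s k) = true := by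
        simp only [hg, decide_eq_true_eq]
        rw [hinv, if_pos hc]; omega
      simp [List.range', hg1]
    · rw [hσk k, if_neg hc]
      have hg1 : g (s k) = false := by
        simp only [hg, decide_eq_false_iff_not, not_lt]
        rw [hinv, if_neg hc]
        omega
      have hg2 : g (s k + 1) = true := by
        simp only [hg, decide_eq_true_eq]
        have h1 : (s k + 1) * m % p = (s k * m % p + m) % p := by
          rw [add_one_mul, ← Nat.mod_add_mod]
        rw [h1, hinv, if_neg hc]
        have h2 : r + (p - m) + m = p + r := by omega
        rw [h2, add_comm p r, Nat.add_mod_right, Nat.mod_eq_of_lt (by omega)]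
        omega
      simp [List.range', hg1, hg2]
  have hmain := flatMap_range_eq σf g s h0 hs m hblock
  have hbounds : ∀ k, k ≤ s k ∧ s k ≤ 2 * k := by
    intro k
    induction k with
    | zero => omega
    | succ k ih =>
        have := hlenσ k
        rw [hs k]
        by_cases hc : k * a % m < a <;> simp [hc] at this <;> omega
  have hsn : s m = p := by
    have h1 : s m * m % p = 0 := by
      have := inv m
      rw [Nat.mul_mod_right] at this
      rw [this, if_pos (by omega)]
    have hdvd : p ∣ s m * m := Nat.dvd_of_mod_eq_zero h1
    have hdvd2 : p ∣ s m := (Nat.Coprime.dvd_of_dvd_mul_right (hcop.symm) hdvd)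
    obtain ⟨c, hc⟩ := hdvd2
    have hb := hbounds m
    have hc1 : c = 1 := by
      rcases Nat.lt_or_ge c 2 with h | h
      · interval_cases c <;> omega
      · have : p * 2 ≤ p * c := Nat.mul_le_mul_left p h
        omega
    rw [hc1, mul_one] at hc
    exact hc
  rw [hsn] at hmain
  have hrhs : (tList (2 * m - p) m).flatMap sigma2 = (List.range m).flatMap σf := by
    unfold tList
    rw [List.flatMap_map]
  rw [hrhs, hmain]
  rfl

/-! ### Primitivity of the words `tList m p` -/

lemma tList_primitive (p : ℕ) : ∀ m, 1 ≤ m → m ≤ p → Nat.Coprime m p →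
    IsPrimitive (wordOf (tList m p)) := by
  induction p using Nat.strong_induction_on with
  | _ p ih =>
    intro m h1 h2 hcop
    rcases eq_or_lt_of_le h2 with rfl | hlt
    · -- m = p, so m = 1 by coprimality
      have hm1 : m = 1 := by
        have h := hcop
        rw [Nat.Coprime, Nat.gcd_self] at h
        exact h
      subst hm1
      have ht : tList 1 1 = [true] := by decide
      rw [ht]
      have hw : wordOf [true] = FreeGroup.of true := by simp [wordOf]
      rw [hw]
      exact isPrimitive_of_true
    · by_cases hc : 2 * m ≤ p
      · have hco : Nat.Coprime m (p - m) := (Nat.coprime_sub_self_right h2).mpr hcop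
        have hstep := tList_step1 m (p - m) h1 (by omega)
          (by rwa [show m + (p - m) = p from by omega])
        rw [show m + (p - m) = p from by omega] at hstep
        rw [hstep, ← substHom_wordOf]
        have hprev := ih (p - m) (by omega) m h1 (by omega) hco
        exact hprev.map eqv1
      · push_neg at hc
        have ha1 : 1 ≤ 2 * m - p := by omega
        have hco : Nat.Coprime (2 * m - p) m := by
          have d2 : Nat.gcd (2 * m - p) m ∣ m := Nat.gcd_dvd_right _ _
          have d1 : Nat.gcd (2 * m - p) m ∣ 2 * m - p := Nat.gcd_dvd_left _ _
          have d3 : Nat.gcd (2 * m - p) m ∣ p := by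
            have h4 : Nat.gcd (2 * m - p) m ∣ 2 * m - (2 * m - p) :=
              Nat.dvd_sub (Dvd.dvd.mul_left d2 2) d1
            rwa [show 2 * m - (2 * m - p) = p from by omega] at h4
          have h5 : Nat.gcd (2 * m - p) m ∣ Nat.gcd m p := Nat.dvd_gcd d2 d3
          rw [hcop] at h5
          exact Nat.dvd_one.mp h5
        have hstep := tList_step2 m p hlt hc hcop
        rw [hstep, ← substHom_wordOf]
        have hprev := ih m hlt (2 * m - p) ha1 (by omega) hco
        exact hprev.map eqv2

/-! ### Arithmetic characterizations -/

lemma key1 (p q q' i : ℕ) (hq'p : q' < p) (hi : i < p)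
    (h1 : ((q * q' : ℕ) : ℤ) ≡ 1 [ZMOD (p : ℤ)]) :
    ((∃ n ∈ Finset.range q', (i + 1) % p = (1 + n * q) % p) ↔ i * q' % p < q') := by
  have hp0 : 0 < p := by omega
  have hZ : (q : ZMod p) * (q' : ZMod p) = 1 := by
    have h := (ZMod.intCast_eq_intCast_iff _ _ _).mpr h1
    push_cast at h
    exact h
  constructor
  · rintro ⟨n, hn, hmod⟩
    rw [Finset.mem_range] at hn
    have hcast : ((i + 1 : ℕ) : ZMod p) = ((1 + n * q : ℕ) : ZMod p) :=
      (ZMod.natCast_eq_natCast_iff _ _ _).mpr hmod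
    push_cast at hcast
    have hiq : ((i * q' : ℕ) : ZMod p) = ((n : ℕ) : ZMod p) := by
      push_cast
      linear_combination (q' : ZMod p) * hcast + (n : ZMod p) * hZ
    have h2 : i * q' % p = n % p := (ZMod.natCast_eq_natCast_iff _ _ _).mp hiq
    rw [Nat.mod_eq_of_lt (show n < p from by omega)] at h2
    omega
  · intro h
    refine ⟨i * q' % p, Finset.mem_range.mpr h, ?_⟩
    have hcast : ((i + 1 : ℕ) : ZMod p) = ((1 + (i * q' % p) * q : ℕ) : ZMod p) := by
      push_cast [ZMod.natCast_mod]
      linear_combination (-(i : ZMod p)) * hZ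
    exact (ZMod.natCast_eq_natCast_iff _ _ _).mp hcast

lemma key2 (p q q' i s : ℕ) (hq'0 : 1 ≤ q') (hq'p : q' < p) (hi : i < p)
    (hm1 : ((q * q' : ℕ) : ℤ) ≡ -1 [ZMOD (p : ℤ)])
    (hs : (s : ZMod p) * (q' : ZMod p) = (q' : ZMod p) - 1) :
    ((∃ n ∈ Finset.range q', (i + 1) % p = (1 + n * q) % p) ↔
      ((i + s) % p) * q' % p < q') := by
  have hp0 : 0 < p := by omega
  have hZ : (q : ZMod p) * (q' : ZMod p) = -1 := by
    have h := (ZMod.intCast_eq_intCast_iff _ _ _).mpr hm1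
    push_cast at h
    exact h
  rw [Nat.mod_mul_mod]
  constructor
  · rintro ⟨n, hn, hmod⟩
    rw [Finset.mem_range] at hn
    have hcast : ((i + 1 : ℕ) : ZMod p) = ((1 + n * q : ℕ) : ZMod p) :=
      (ZMod.natCast_eq_natCast_iff _ _ _).mpr hmod
    push_cast at hcast
    have hval : (((i + s) * q' : ℕ) : ZMod p) = ((q' - 1 - n : ℕ) : ZMod p) := by
      rw [show q' - 1 - n = q' - (1 + n) from by omega,
        Nat.cast_sub (show 1 + n ≤ q' from by omega)]
      push_cast
      linear_combination (q' : ZMod p) * hcast + (n : ZMod p) * hZ + hs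
    have h2 : (i + s) * q' % p = (q' - 1 - n) % p :=
      (ZMod.natCast_eq_natCast_iff _ _ _).mp hval
    rw [Nat.mod_eq_of_lt (show q' - 1 - n < p from by omega)] at h2
    omega
  · intro h
    set n' := (i + s) * q' % p with hn'
    refine ⟨q' - 1 - n', Finset.mem_range.mpr (by omega), ?_⟩
    have hval : ((n' : ℕ) : ZMod p) = (((i + s) * q' : ℕ) : ZMod p) := by
      rw [hn', ZMod.natCast_mod]
    push_cast at hval
    have hcast : ((i + 1 : ℕ) : ZMod p) = ((1 + (q' - 1 - n') * q : ℕ) : ZMod p) := by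
      rw [show q' - 1 - n' = q' - (1 + n') from by omega]
      push_cast [Nat.cast_sub (show 1 + n' ≤ q' from by omega)]
      linear_combination (q : ZMod p) * hval + (i : ZMod p) * hZ + (q : ZMod p) * hs
    exact (ZMod.natCast_eq_natCast_iff _ _ _).mp hcast

/-- For coprime `p > q ≥ 1` and the unique `q'` with `1 ≤ q' ≤ p/2` and
`q·q' ≡ ±1 (mod p)`, the word `w_{q'}` of the `(p,q)`-sequence is primitive;
more precisely, if `qq' ≡ 1 (mod p)` then `w_{q'}` equals the Osborne–Zieschang
word `w(q', p−q')`, and if `qq' ≡ −1 (mod p)` then `w_{q'}` is a cyclic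
permutation of `w(q', p−q')`. -/
theorem pqSequence_q'_primitive (p q q' : ℕ) (hq : 1 ≤ q) (hqp : q < p)
    (hcop : Nat.Coprime p q) (hq'1 : 1 ≤ q') (hq'2 : 2 * q' ≤ p)
    (hqq' : ((q * q' : ℕ) : ℤ) ≡ 1 [ZMOD (p : ℤ)] ∨
            ((q * q' : ℕ) : ℤ) ≡ -1 [ZMOD (p : ℤ)]) :
    IsPrimitive (wordOf (pqLetters p q q')) ∧
    (((q * q' : ℕ) : ℤ) ≡ 1 [ZMOD (p : ℤ)] →
      pqLetters p q q' = ozLetters q' (p - q')) ∧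
    (((q * q' : ℕ) : ℤ) ≡ -1 [ZMOD (p : ℤ)] →
      pqLetters p q q' ~r ozLetters q' (p - q')) := by
  have hp0 : 0 < p := by omega
  have hq'p : q' < p := by omega
  have hcop' : Nat.Coprime q' p := by
    have hgq : (Nat.gcd q' p : ℤ) ∣ ((q * q' : ℕ) : ℤ) :=
      Int.natCast_dvd_natCast.mpr (Dvd.dvd.mul_left (Nat.gcd_dvd_left q' p) q)
    have hgp : (Nat.gcd q' p : ℤ) ∣ (p : ℤ) :=
      Int.natCast_dvd_natCast.mpr (Nat.gcd_dvd_right q' p)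
    have hone : (Nat.gcd q' p : ℤ) ∣ 1 := by
      rcases hqq' with h | h
      · have hd : (p : ℤ) ∣ 1 - ((q * q' : ℕ) : ℤ) := Int.ModEq.dvd h
        have h2 := dvd_add (hgp.trans hd) hgq
        simpa using h2
      · have hd : (p : ℤ) ∣ -1 - ((q * q' : ℕ) : ℤ) := Int.ModEq.dvd h
        have h2 := dvd_add (hgp.trans hd) hgq
        simp only [sub_add_cancel] at h2
        exact (dvd_neg).mp h2
    have hnat : Nat.gcd q' p ∣ 1 := by exact_mod_cast hone
    exact Nat.dvd_one.mp hnat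
  have hozt : ozLetters q' (p - q') = tList q' p := by
    have h := ozLetters_eq_tList q' (p - q') hq'1 (by omega)
    rwa [show q' + (p - q') = p from by omega] at h
  have heq : ((q * q' : ℕ) : ℤ) ≡ 1 [ZMOD (p : ℤ)] →
      pqLetters p q q' = ozLetters q' (p - q') := by
    intro h1
    rw [hozt]
    unfold pqLetters tList
    apply List.map_congr_left
    intro i hi
    rw [List.mem_range] at hi
    rw [decide_eq_decide]
    exact key1 p q q' i hq'p hi h1
  set s : ℕ := (q' - 1) * (p - q) with hsdef
  have hrot : ((q * q' : ℕ) : ℤ) ≡ -1 [ZMOD (p : ℤ)] →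
      pqLetters p q q' = (ozLetters q' (p - q')).rotate s := by
    intro h1
    have hZ : (q : ZMod p) * (q' : ZMod p) = -1 := by
      have h := (ZMod.intCast_eq_intCast_iff _ _ _).mpr h1
      push_cast at h
      exact h
    have hs : (s : ZMod p) * (q' : ZMod p) = (q' : ZMod p) - 1 := by
      rw [hsdef]
      push_cast [Nat.cast_sub hq'1, Nat.cast_sub (le_of_lt hqp)]
      first
        | rw [ZMod.natCast_self]
        | skip
      linear_combination (1 - (q' : ZMod p)) * hZ
    rw [hozt]
    apply List.ext_getElem
    · simp [pqLetters, tList]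
    · intro i h1' h2'
      have hi : i < p := by simpa [pqLetters] using h1'
      simp only [pqLetters, tList, List.getElem_map, List.getElem_range, List.getElem_rotate,
        List.length_map, List.length_range, List.length_rotate]
      rw [decide_eq_decide]
      exact key2 p q q' i s hq'1 hq'p hi h1 hs
  refine ⟨?_, heq, fun h => ?_⟩
  · rcases hqq' with h | h
    · rw [heq h, hozt]
      exact tList_primitive p q' hq'1 (by omega) hcop'
    · rw [hrot h, hozt]
      exact isPrimitive_wordOf_rotate _ s (tList_primitive p q' hq'1 (by omega) hcop')
  · rw [hrot h]
    exact List.IsRotated.symm (show ozLetters q' (p - q') ~r (ozLetters q' (p - q')).rotate s from ⟨s, rfl⟩)
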